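/- Let n ≥ 18, let C ⊆ 𝔽₂ⁿ be a finite set of vectors each of Hamming weight exactly 8 with pairwise Hamming distances at least 8, and let V ⊆ ℝⁿ be the odd-signs kissing configuration associated to C. Let D ⊆ 𝔽₂ⁿ be a finite set such that (a) every d ∈ D satisfies Σᵢ dᵢcᵢ = 0 in 𝔽₂ for every c ∈ C, and (b) any two distinct elements of D have Hamming distance at least n/4. For d ∈ D define v_d ∈ ℝⁿ by (v_d)ᵢ = (−1)^{dᵢ}·√(8/n). Then every vector in V ∪ {v_d : d ∈ D} has squared Euclidean norm 8, any two distinct vectors in V ∪ {v_d : d ∈ D} have inner product at most 4, and |V ∪ {v_d : d ∈ D}| = 4·(n choose 2) + 128·|C| + |D|. -/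

import Mathlib

open scoped RealInnerProductSpace

/-- The odd-signs kissing configuration in `ℝⁿ` associated to a constant-weight-8
binary code `C ⊆ 𝔽₂ⁿ`: the union of (i) all vectors with exactly two nonzero
coordinates, each equal to `2` or `-2`, and (ii) all vectors with entries `±1` on
the support of some codeword `c ∈ C` and `0` elsewhere, having an odd number of
entries equal to `-1`. -/
def oddKissingConfig (n : ℕ) (C : Finset (Fin n → ZMod 2)) :
    Set (EuclideanSpace ℝ (Fin n)) :=
  {w | (∃ i j : Fin n, i ≠ j ∧ (w i = 2 ∨ w i = -2) ∧ (w j = 2 ∨ w j = -2) ∧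
          ∀ k : Fin n, k ≠ i → k ≠ j → w k = 0) ∨
       (∃ c ∈ C, (∀ i : Fin n, c i ≠ 0 → (w i = 1 ∨ w i = -1)) ∧
          (∀ i : Fin n, c i = 0 → w i = 0) ∧
          Odd {i : Fin n | w i = -1}.ncard)}

/-- The vector `v_d ∈ ℝⁿ` with `(v_d)ᵢ = (-1)^{dᵢ}·√(8/n)` associated to `d ∈ 𝔽₂ⁿ`. -/
noncomputable def signVector (n : ℕ) (d : Fin n → ZMod 2) : EuclideanSpace ℝ (Fin n) :=
  WithLp.toLp 2 (fun i => (if d i = 0 then (1 : ℝ) else -1) * Real.sqrt (8 / n))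

/- ============ auxiliary lemmas ============ -/

private lemma zmod2_em : ∀ x : ZMod 2, x = 0 ∨ x = 1 := by decide

private lemma odd_cast_zmod2 {k : ℕ} (h : Odd k) : (k : ZMod 2) = 1 := by
  obtain ⟨m, rfl⟩ := h
  push_cast
  have h2 : (2 : ZMod 2) = 0 := by decide
  rw [h2]; ring

private lemma even_of_cast_zmod2 {k : ℕ} (h : (k : ZMod 2) = 0) : k % 2 = 0 := by
  have := (ZMod.natCast_eq_zero_iff k 2).mp h
  omega

private lemma odd_of_cast_zmod2 {k : ℕ} (h : (k : ZMod 2) = 1) : k % 2 = 1 := by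
  rcases Nat.even_or_odd k with he | ho
  · exfalso
    obtain ⟨m, rfl⟩ := he
    have : ((m + m : ℕ) : ZMod 2) = 0 := by
      push_cast
      have h2 : (2 : ZMod 2) = 0 := by decide
      ring_nf
      rw [show ((m : ZMod 2) * 2) = (m : ZMod 2) * 0 from by rw [h2]]
      ring
    rw [this] at h
    exact absurd h (by decide)
  · exact Nat.odd_iff.mp ho

private lemma card_filter_eq_sum {α : Type*} (s : Finset α) (p : α → Prop) [DecidablePred p] :
    (s.filter p).card = ∑ a ∈ s, if p a then 1 else 0 := by
  simpa using (Finset.natCast_card_filter (α := ℕ) p s)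

/-- The number of odd-cardinality subsets of a nonempty finite set. -/
private lemma card_odd_powerset {α : Type*} [DecidableEq α] (s : Finset α) (hs : s.Nonempty) :
    ((s.powerset.filter fun t => Odd t.card).card) = 2 ^ (s.card - 1) := by
  classical
  obtain ⟨a, ha⟩ := hs
  have key : (s.powerset.filter fun t => Odd t.card).card
      = (s.powerset.filter fun t => ¬ Odd t.card).card := by
    apply Finset.card_nbij' (fun t => if a ∈ t then t.erase a else insert a t)
      (fun t => if a ∈ t then t.erase a else insert a t)
    · intro t ht
      simp only [Finset.coe_filter, Set.mem_setOf_eq, Finset.mem_coe, Finset.mem_filter, Finset.mem_powerset] at ht ⊢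
      obtain ⟨hts, hodd⟩ := ht
      by_cases hat : a ∈ t
      · have hpos : 0 < t.card := Finset.card_pos.mpr ⟨a, hat⟩
        simp only [hat, if_true]
        refine ⟨(Finset.erase_subset a t).trans hts, ?_⟩
        rw [Finset.card_erase_of_mem hat]
        simp only [Nat.odd_iff] at hodd ⊢
        omega
      · simp only [hat, if_false]
        refine ⟨Finset.insert_subset ha hts, ?_⟩
        rw [Finset.card_insert_of_notMem hat]
        simp only [Nat.odd_iff] at hodd ⊢
        omega
    · intro t ht
      simp only [Finset.coe_filter, Set.mem_setOf_eq, Finset.mem_coe, Finset.mem_filter, Finset.mem_powerset] at ht ⊢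
      obtain ⟨hts, hodd⟩ := ht
      by_cases hat : a ∈ t
      · have hpos : 0 < t.card := Finset.card_pos.mpr ⟨a, hat⟩
        simp only [hat, if_true]
        refine ⟨(Finset.erase_subset a t).trans hts, ?_⟩
        rw [Finset.card_erase_of_mem hat]
        simp only [Nat.odd_iff] at hodd ⊢
        omega
      · simp only [hat, if_false]
        refine ⟨Finset.insert_subset ha hts, ?_⟩
        rw [Finset.card_insert_of_notMem hat]
        simp only [Nat.odd_iff] at hodd ⊢
        omega
    · intro t ht
      by_cases hat : a ∈ t
      · simp only [hat, if_true, Finset.mem_erase, ne_eq, not_true_eq_false, false_and,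
          if_false]
        exact Finset.insert_erase hat
      · simp only [hat, if_false, Finset.mem_insert, true_or, if_true]
        exact Finset.erase_insert hat
    · intro t ht
      by_cases hat : a ∈ t
      · simp only [hat, if_true, Finset.mem_erase, ne_eq, not_true_eq_false, false_and,
          if_false]
        exact Finset.insert_erase hat
      · simp only [hat, if_false, Finset.mem_insert, true_or, if_true]
        exact Finset.erase_insert hat
  have total := Finset.card_filter_add_card_filter_not
    (s := s.powerset) (p := fun t => Odd t.card)
  rw [Finset.card_powerset] at total
  have hc : 1 ≤ s.card := Finset.card_pos.mpr ⟨a, ha⟩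
  have h2 : 2 ^ s.card = 2 * 2 ^ (s.card - 1) := by
    conv_lhs => rw [← Nat.succ_pred_eq_of_pos hc]
    rw [pow_succ, Nat.pred_eq_sub_one]
    ring
  omega

/-- The number of ordered pairs `(i, j)` with `i < j` in `Fin n`. -/
private lemma card_lt_pairs (n : ℕ) :
    ((Finset.univ : Finset (Fin n × Fin n)).filter fun p => p.1 < p.2).card = n.choose 2 := by
  classical
  have hsym : ((Finset.univ : Finset (Fin n × Fin n)).filter fun p => p.1 < p.2).card
      = ((Finset.univ : Finset (Fin n × Fin n)).filter fun p => p.2 < p.1).card := by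
    apply Finset.card_nbij' (fun p => (p.2, p.1)) (fun p => (p.2, p.1))
    · intro p hp
      simp only [Finset.coe_filter, Set.mem_setOf_eq, Finset.mem_coe, Finset.mem_filter, Finset.mem_univ, true_and] at hp ⊢
      exact hp
    · intro p hp
      simp only [Finset.coe_filter, Set.mem_setOf_eq, Finset.mem_coe, Finset.mem_filter, Finset.mem_univ, true_and] at hp ⊢
      exact hp
    · intro p _
      rfl
    · intro p _
      rfl
  have hdisj : Disjoint
      ((Finset.univ : Finset (Fin n × Fin n)).filter fun p => p.1 < p.2)
      ((Finset.univ : Finset (Fin n × Fin n)).filter fun p => p.2 < p.1) := by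
    rw [Finset.disjoint_left]
    intro p hp hq
    simp only [Finset.mem_filter, Finset.mem_univ, true_and] at hp hq
    exact absurd hq (not_lt.mpr hp.le)
  have hcup : (((Finset.univ : Finset (Fin n × Fin n)).filter fun p => p.1 < p.2) ∪
      ((Finset.univ : Finset (Fin n × Fin n)).filter fun p => p.2 < p.1))
      = (Finset.univ : Finset (Fin n)).offDiag := by
    ext p
    simp only [Finset.mem_union, Finset.mem_filter, Finset.mem_univ, true_and,
      Finset.mem_offDiag]
    constructor
    · rintro (h | h)
      · exact ne_of_lt h
      · exact (ne_of_lt h).symm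
    · intro h
      rcases lt_or_gt_of_ne h with h | h
      · exact Or.inl h
      · exact Or.inr h
  have hcard := Finset.card_union_of_disjoint hdisj
  rw [hcup, Finset.offDiag_card, Finset.card_univ, Fintype.card_fin] at hcard
  have hmul : n * (n - 1) = n * n - n := by
    rw [Nat.mul_sub_left_distrib, mul_one]
  rw [Nat.choose_two_right]
  omega

/-- Vector with two `±2` entries, parametrized by positions and sign bits. -/
private noncomputable def pairVec (n : ℕ) (q : (Fin n × Fin n) × Bool × Bool) :
    EuclideanSpace ℝ (Fin n) :=
  WithLp.toLp 2 (fun k => if k = q.1.1 then (if q.2.1 then (2 : ℝ) else -2)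
    else if k = q.1.2 then (if q.2.2 then (2 : ℝ) else -2) else 0)

/-- Vector with `±1` entries on the support of a codeword, `-1` exactly on `S`. -/
private noncomputable def codeVec (n : ℕ) (q : Σ _ : Fin n → ZMod 2, Finset (Fin n)) :
    EuclideanSpace ℝ (Fin n) :=
  WithLp.toLp 2 (fun i => if i ∈ q.2 then (-1 : ℝ) else if q.1 i ≠ 0 then 1 else 0)

set_option maxHeartbeats 2000000 in
/-- Let `n ≥ 18`, let `C ⊆ 𝔽₂ⁿ` be a constant-weight-8 code of minimum distance 8,
and let `D ⊆ 𝔽₂ⁿ` be a set of vectors orthogonal to every codeword of `C` mod 2,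
with pairwise Hamming distances at least `n/4`.  Then adjoining the vectors `v_d`
for `d ∈ D` to the odd-signs configuration of `C` still gives vectors of squared
norm 8 with pairwise inner products at most 4, and the enlarged configuration has
`4·(n choose 2) + 128·|C| + |D|` elements. -/
theorem oddKissingConfig_enlarged (n : ℕ) (hn : 18 ≤ n)
    (C : Finset (Fin n → ZMod 2))
    (hweight : ∀ c ∈ C, hammingNorm c = 8)
    (hdist : ∀ c ∈ C, ∀ c' ∈ C, c ≠ c' → 8 ≤ hammingDist c c')
    (D : Finset (Fin n → ZMod 2))
    (horth : ∀ d ∈ D, ∀ c ∈ C, (∑ i : Fin n, d i * c i) = 0)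
    (hDdist : ∀ d ∈ D, ∀ d' ∈ D, d ≠ d' → (n : ℝ) / 4 ≤ (hammingDist d d' : ℝ)) :
    (∀ v ∈ oddKissingConfig n C ∪ signVector n '' ↑D, ‖v‖ ^ 2 = 8) ∧
    (∀ v ∈ oddKissingConfig n C ∪ signVector n '' ↑D,
      ∀ w ∈ oddKissingConfig n C ∪ signVector n '' ↑D, v ≠ w → ⟪v, w⟫ ≤ 4) ∧
    (oddKissingConfig n C ∪ signVector n '' ↑D).ncard =
      4 * n.choose 2 + 128 * C.card + D.card := by
  classical
  have hnpos : 0 < n := by omega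
  have hn0 : (0 : ℝ) < n := by exact_mod_cast hnpos
  have hn18 : (18 : ℝ) ≤ n := by exact_mod_cast hn
  set s : ℝ := Real.sqrt (8 / n) with hs_def
  have hsq : s ^ 2 = 8 / (n : ℝ) := Real.sq_sqrt (by positivity)
  have hss : s * s = 8 / (n : ℝ) := by rw [← hsq]; ring
  have hs_nonneg : 0 ≤ s := Real.sqrt_nonneg _
  have hs_pos : 0 < s := Real.sqrt_pos.mpr (by positivity)
  have hs23 : s ≤ 2 / 3 := by
    have h1 : (8 : ℝ) / n ≤ 4 / 9 := by
      rw [div_le_div_iff₀ hn0 (by norm_num)]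
      nlinarith
    calc s ≤ Real.sqrt (4 / 9) := Real.sqrt_le_sqrt h1
      _ = 2 / 3 := by
          rw [show (4 : ℝ) / 9 = (2 / 3) ^ 2 by norm_num, Real.sqrt_sq (by norm_num)]
  have hip : ∀ v w : EuclideanSpace ℝ (Fin n), ⟪v, w⟫ = ∑ i, v i * w i := by
    intro v w; simp [PiLp.inner_apply, RCLike.inner_apply, mul_comm]
  have hnormsq : ∀ v : EuclideanSpace ℝ (Fin n), ‖v‖ ^ 2 = ∑ i, v i * v i := by
    intro v; rw [← real_inner_self_eq_norm_sq]; exact hip v v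
  -- coordinates of signVector
  have hsv : ∀ (d : Fin n → ZMod 2) (k : Fin n),
      signVector n d k = s ∨ signVector n d k = -s := by
    intro d k
    simp only [signVector, ← hs_def]
    by_cases h : d k = 0
    · left; rw [if_pos h]; ring
    · right; rw [if_neg h]; ring
  ------------------------------------------------------------------
  -- norm computations
  ------------------------------------------------------------------
  have hnorm1 : ∀ v : EuclideanSpace ℝ (Fin n),
      (∃ i j : Fin n, i ≠ j ∧ (v i = 2 ∨ v i = -2) ∧ (v j = 2 ∨ v j = -2) ∧
        ∀ k : Fin n, k ≠ i → k ≠ j → v k = 0) → ‖v‖ ^ 2 = 8 := by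
    rintro v ⟨i, j, hij, hvi, hvj, h0⟩
    rw [hnormsq]
    rw [← Finset.sum_subset (Finset.subset_univ ({i, j} : Finset (Fin n)))
      (by
        intro k _ hk
        simp only [Finset.mem_insert, Finset.mem_singleton, not_or] at hk
        rw [h0 k hk.1 hk.2, zero_mul])]
    rw [Finset.sum_pair hij]
    rcases hvi with h1 | h1 <;> rcases hvj with h2 | h2 <;> rw [h1, h2] <;> norm_num
  have hnorm2 : ∀ (v : EuclideanSpace ℝ (Fin n)) (c : Fin n → ZMod 2), c ∈ C →
      (∀ i, c i ≠ 0 → (v i = 1 ∨ v i = -1)) → (∀ i, c i = 0 → v i = 0) → ‖v‖ ^ 2 = 8 := by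
    intro v c hc h1 h0
    rw [hnormsq]
    have hterm : ∀ i : Fin n, v i * v i = if c i ≠ 0 then (1 : ℝ) else 0 := by
      intro i
      by_cases h : c i = 0
      · simp [h, h0 i h]
      · rcases h1 i h with hv | hv <;> simp [h, hv]
    rw [Finset.sum_congr rfl (fun i _ => hterm i), Finset.sum_boole]
    have h8 : (Finset.univ.filter fun i => c i ≠ 0).card = 8 := hweight c hc
    rw [h8]; norm_num
  have hnormW : ∀ d : Fin n → ZMod 2, ‖signVector n d‖ ^ 2 = 8 := by
    intro d
    rw [hnormsq]
    have hterm : ∀ i : Fin n, signVector n d i * signVector n d i = 8 / n := by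
      intro i
      rcases hsv d i with h | h <;> rw [h] <;> rw [← hss] <;> ring
    rw [Finset.sum_congr rfl (fun i _ => hterm i), Finset.sum_const, Finset.card_univ,
      Fintype.card_fin, nsmul_eq_mul]
    field_simp
  ------------------------------------------------------------------
  -- entry values of type-2 vectors
  ------------------------------------------------------------------
  have hvals : ∀ (u : EuclideanSpace ℝ (Fin n)) (c : Fin n → ZMod 2),
      (∀ i, c i ≠ 0 → (u i = 1 ∨ u i = -1)) → (∀ i, c i = 0 → u i = 0) →
      ∀ k, u k = 0 ∨ u k = 1 ∨ u k = -1 := by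
    intro u c h1 h0 k
    by_cases h : c k = 0
    · exact Or.inl (h0 k h)
    · rcases h1 k h with h' | h'
      · exact Or.inr (Or.inl h')
      · exact Or.inr (Or.inr h')
  ------------------------------------------------------------------
  -- inner product bounds
  ------------------------------------------------------------------
  have h11 : ∀ v w : EuclideanSpace ℝ (Fin n),
      (∃ i j : Fin n, i ≠ j ∧ (v i = 2 ∨ v i = -2) ∧ (v j = 2 ∨ v j = -2) ∧
        ∀ k : Fin n, k ≠ i → k ≠ j → v k = 0) →
      (∃ i j : Fin n, i ≠ j ∧ (w i = 2 ∨ w i = -2) ∧ (w j = 2 ∨ w j = -2) ∧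
        ∀ k : Fin n, k ≠ i → k ≠ j → w k = 0) →
      v ≠ w → ⟪v, w⟫ ≤ 4 := by
    rintro v w ⟨i, j, hij, hvi, hvj, hv0⟩ ⟨i', j', hij', hwi, hwj, hw0⟩ hne
    rw [hip]
    rw [← Finset.sum_subset (Finset.subset_univ ({i, j} : Finset (Fin n)))
      (by
        intro k _ hk
        simp only [Finset.mem_insert, Finset.mem_singleton, not_or] at hk
        rw [hv0 k hk.1 hk.2, zero_mul])]
    rw [Finset.sum_pair hij]
    have hw : ∀ k : Fin n, w k = 0 ∨ w k = 2 ∨ w k = -2 := by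
      intro k
      by_cases h1 : k = i'
      · subst h1; tauto
      · by_cases h2 : k = j'
        · subst h2; tauto
        · exact Or.inl (hw0 k h1 h2)
    by_contra hgt
    push_neg at hgt
    have key : v i = w i ∧ v j = w j := by
      rcases hvi with h1 | h1 <;> rcases hvj with h2 | h2 <;>
        rcases hw i with h3 | h3 | h3 <;> rcases hw j with h4 | h4 | h4 <;>
        rw [h1, h2, h3, h4] at hgt <;> norm_num at hgt <;>
        exact ⟨by rw [h1, h3], by rw [h2, h4]⟩
    have hwine : w i ≠ 0 := by
      rw [← key.1]; rcases hvi with h | h <;> rw [h] <;> norm_num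
    have hwjne : w j ≠ 0 := by
      rw [← key.2]; rcases hvj with h | h <;> rw [h] <;> norm_num
    have hi_mem : i = i' ∨ i = j' := by
      by_contra hcon
      push_neg at hcon
      exact hwine (hw0 i hcon.1 hcon.2)
    have hj_mem : j = i' ∨ j = j' := by
      by_contra hcon
      push_neg at hcon
      exact hwjne (hw0 j hcon.1 hcon.2)
    have heq : v = w := by
      ext k
      by_cases hk1 : k = i
      · subst hk1; exact key.1
      · by_cases hk2 : k = j
        · subst hk2; exact key.2
        · rw [hv0 k hk1 hk2]
          rcases hi_mem with h | h <;> rcases hj_mem with h' | h'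
          · exact absurd (h.trans h'.symm) hij
          · subst h; subst h'; exact (hw0 k hk1 hk2).symm
          · subst h; subst h'; exact (hw0 k hk2 hk1).symm
          · exact absurd (h.trans h'.symm) hij
    exact hne heq
  have h12 : ∀ v w : EuclideanSpace ℝ (Fin n),
      (∃ i j : Fin n, i ≠ j ∧ (v i = 2 ∨ v i = -2) ∧ (v j = 2 ∨ v j = -2) ∧
        ∀ k : Fin n, k ≠ i → k ≠ j → v k = 0) →
      (∀ k : Fin n, w k = 0 ∨ w k = 1 ∨ w k = -1) → ⟪v, w⟫ ≤ 4 := by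
    rintro v w ⟨i, j, hij, hvi, hvj, hv0⟩ hw
    rw [hip]
    rw [← Finset.sum_subset (Finset.subset_univ ({i, j} : Finset (Fin n)))
      (by
        intro k _ hk
        simp only [Finset.mem_insert, Finset.mem_singleton, not_or] at hk
        rw [hv0 k hk.1 hk.2, zero_mul])]
    rw [Finset.sum_pair hij]
    have hb1 : v i * w i ≤ 2 := by
      rcases hvi with h | h <;> rcases hw i with h' | h' | h' <;> rw [h, h'] <;> norm_num
    have hb2 : v j * w j ≤ 2 := by
      rcases hvj with h | h <;> rcases hw j with h' | h' | h' <;> rw [h, h'] <;> norm_num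
    linarith
  have h1W : ∀ (v : EuclideanSpace ℝ (Fin n)) (d : Fin n → ZMod 2),
      (∃ i j : Fin n, i ≠ j ∧ (v i = 2 ∨ v i = -2) ∧ (v j = 2 ∨ v j = -2) ∧
        ∀ k : Fin n, k ≠ i → k ≠ j → v k = 0) → ⟪v, signVector n d⟫ ≤ 4 := by
    rintro v d ⟨i, j, hij, hvi, hvj, hv0⟩
    rw [hip]
    rw [← Finset.sum_subset (Finset.subset_univ ({i, j} : Finset (Fin n)))
      (by
        intro k _ hk
        simp only [Finset.mem_insert, Finset.mem_singleton, not_or] at hk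
        rw [hv0 k hk.1 hk.2, zero_mul])]
    rw [Finset.sum_pair hij]
    have hb : ∀ k : Fin n, (v k = 2 ∨ v k = -2) → v k * signVector n d k ≤ 4 / 3 := by
      intro k hk
      rcases hk with h | h <;> rcases hsv d k with h' | h' <;> rw [h, h'] <;> nlinarith
    linarith [hb i hvi, hb j hvj]
  ------------------------------------------------------------------
  -- type 2 with type 2
  ------------------------------------------------------------------
  have hsetcard : ∀ u : EuclideanSpace ℝ (Fin n),
      {i : Fin n | u i = -1}.ncard = (Finset.univ.filter fun i => u i = -1).card := by
    intro u
    rw [Set.ncard_eq_toFinset_card', Set.toFinset_setOf]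
  have h22 : ∀ (v w : EuclideanSpace ℝ (Fin n)) (c c' : Fin n → ZMod 2),
      c ∈ C → c' ∈ C →
      (∀ i, c i ≠ 0 → (v i = 1 ∨ v i = -1)) → (∀ i, c i = 0 → v i = 0) →
      Odd {i : Fin n | v i = -1}.ncard →
      (∀ i, c' i ≠ 0 → (w i = 1 ∨ w i = -1)) → (∀ i, c' i = 0 → w i = 0) →
      Odd {i : Fin n | w i = -1}.ncard →
      v ≠ w → ⟪v, w⟫ ≤ 4 := by
    intro v w c c' hc hc' hv1 hv0 hvodd hw1 hw0 hwodd hne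
    rw [hip]
    by_cases hcc : c = c'
    · subst hcc
      set A : Finset (Fin n) := Finset.univ.filter fun i => c i ≠ 0 with hA
      have hA8 : A.card = 8 := hweight c hc
      have hsum : ∑ i, v i * w i = ∑ i ∈ A, v i * w i := by
        symm
        apply Finset.sum_subset (Finset.subset_univ A)
        intro k _ hk
        simp only [hA, Finset.mem_filter, Finset.mem_univ, true_and, not_not] at hk
        rw [hv0 k hk, zero_mul]
      rw [hsum]
      set E : Finset (Fin n) := A.filter fun i => v i ≠ w i with hE
      -- values on the two parts
      have hvalE : ∀ i ∈ E, v i * w i = -1 := by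
        intro i hi
        simp only [hE, hA, Finset.mem_filter, Finset.mem_univ, true_and] at hi
        obtain ⟨hci, hvw⟩ := hi
        rcases hv1 i hci with h | h <;> rcases hw1 i hci with h' | h' <;>
          rw [h, h'] at hvw ⊢ <;> norm_num at hvw <;> norm_num
      have hvalF : ∀ i ∈ A.filter (fun i => ¬ v i ≠ w i), v i * w i = 1 := by
        intro i hi
        simp only [hA, Finset.mem_filter, Finset.mem_univ, true_and, not_not] at hi
        obtain ⟨hci, hvw⟩ := hi
        rcases hv1 i hci with h | h <;> rw [← hvw, h] <;> norm_num
      have hsplit := Finset.sum_filter_add_sum_filter_not A (fun i => v i ≠ w i)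
        (fun i => v i * w i)
      have hcards := Finset.card_filter_add_card_filter_not
        (s := A) (p := fun i => v i ≠ w i)
      -- parity of E.card
      have hNv : ((Finset.univ.filter fun i => v i = -1).card : ZMod 2) = 1 :=
        odd_cast_zmod2 (by rw [← hsetcard v]; exact hvodd)
      have hNw : ((Finset.univ.filter fun i => w i = -1).card : ZMod 2) = 1 :=
        odd_cast_zmod2 (by rw [← hsetcard w]; exact hwodd)
      have hNvA : ((Finset.univ.filter fun i => v i = -1).card : ZMod 2)
          = ∑ i ∈ A, if v i = -1 then (1 : ZMod 2) else 0 := by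
        rw [Finset.natCast_card_filter]
        symm
        apply Finset.sum_subset (Finset.subset_univ A)
        intro k _ hk
        simp only [hA, Finset.mem_filter, Finset.mem_univ, true_and, not_not] at hk
        rw [if_neg]
        rw [hv0 k hk]
        norm_num
      have hNwA : ((Finset.univ.filter fun i => w i = -1).card : ZMod 2)
          = ∑ i ∈ A, if w i = -1 then (1 : ZMod 2) else 0 := by
        rw [Finset.natCast_card_filter]
        symm
        apply Finset.sum_subset (Finset.subset_univ A)
        intro k _ hk
        simp only [hA, Finset.mem_filter, Finset.mem_univ, true_and, not_not] at hk
        rw [if_neg]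
        rw [hw0 k hk]
        norm_num
      have hparity : (E.card : ZMod 2) = 0 := by
        have hcast : (E.card : ZMod 2) = ∑ i ∈ A, if v i ≠ w i then (1 : ZMod 2) else 0 :=
          Finset.natCast_card_filter _ _
        have hpoint : ∀ i ∈ A, (if v i ≠ w i then (1 : ZMod 2) else 0)
            = (if v i = -1 then (1 : ZMod 2) else 0) + (if w i = -1 then (1 : ZMod 2) else 0) := by
          intro i hi
          simp only [hA, Finset.mem_filter, Finset.mem_univ, true_and] at hi
          rcases hv1 i hi with h | h <;> rcases hw1 i hi with h' | h' <;>
            rw [h, h'] <;> norm_num <;> decide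
        rw [hcast, Finset.sum_congr rfl hpoint, Finset.sum_add_distrib, ← hNvA, ← hNwA,
          hNv, hNw]
        decide
      have hEpos : 0 < E.card := by
        rcases Nat.eq_zero_or_pos E.card with h | h
        · exfalso
          apply hne
          ext k
          by_cases hk : c k = 0
          · rw [hv0 k hk, hw0 k hk]
          · by_contra hvw
            have : k ∈ E := by
              simp only [hE, hA, Finset.mem_filter, Finset.mem_univ, true_and]
              exact ⟨hk, hvw⟩
            rw [Finset.card_eq_zero.mp h] at this
            exact absurd this (Finset.notMem_empty k)
        · exact h
      have hE2 : 2 ≤ E.card := by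
        have := even_of_cast_zmod2 hparity
        omega
      rw [← hsplit]
      rw [Finset.sum_congr rfl hvalE, Finset.sum_congr rfl hvalF, Finset.sum_const,
        Finset.sum_const, nsmul_eq_mul, nsmul_eq_mul, mul_one]
      have hEle8 : E.card ≤ 8 := by
        rw [hE]
        exact (Finset.card_filter_le _ _).trans hA8.le
      have hcards' : (A.filter (fun i => ¬ v i ≠ w i)).card = 8 - E.card := by
        rw [hE]
        omega
      rw [hcards']
      have hcast8 : ((8 - E.card : ℕ) : ℝ) = 8 - (E.card : ℝ) := by
        rw [Nat.cast_sub hEle8]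
        norm_num
      rw [hcast8]
      have : (2 : ℝ) ≤ E.card := by exact_mod_cast hE2
      linarith
    · -- different codewords
      set B : Finset (Fin n) := Finset.univ.filter fun i => c i ≠ 0 ∧ c' i ≠ 0 with hB
      have hsum : ∑ i, v i * w i = ∑ i ∈ B, v i * w i := by
        symm
        apply Finset.sum_subset (Finset.subset_univ B)
        intro k _ hk
        simp only [hB, Finset.mem_filter, Finset.mem_univ, true_and, not_and_or, not_not] at hk
        rcases hk with h | h
        · rw [hv0 k h, zero_mul]
        · rw [hw0 k h, mul_zero]
      rw [hsum]
      have hbound : ∀ i ∈ B, v i * w i ≤ 1 := by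
        intro i hi
        simp only [hB, Finset.mem_filter, Finset.mem_univ, true_and] at hi
        rcases hv1 i hi.1 with h | h <;> rcases hw1 i hi.2 with h' | h' <;>
          rw [h, h'] <;> norm_num
      have hB4 : B.card ≤ 4 := by
        have hkey : hammingDist c c' + 2 * B.card = hammingNorm c + hammingNorm c' := by
          have e1 : hammingDist c c' = ∑ i, if c i ≠ c' i then 1 else 0 :=
            card_filter_eq_sum _ _
          have e2 : hammingNorm c = ∑ i, if c i ≠ 0 then 1 else 0 :=
            card_filter_eq_sum _ _
          have e3 : hammingNorm c' = ∑ i, if c' i ≠ 0 then 1 else 0 :=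
            card_filter_eq_sum _ _
          have e4 : B.card = ∑ i, if c i ≠ 0 ∧ c' i ≠ 0 then 1 else 0 :=
            card_filter_eq_sum _ _
          rw [e1, e2, e3, e4, Finset.mul_sum, ← Finset.sum_add_distrib,
            ← Finset.sum_add_distrib]
          apply Finset.sum_congr rfl
          intro i _
          rcases zmod2_em (c i) with h | h <;> rcases zmod2_em (c' i) with h' | h' <;>
            rw [h, h'] <;> decide
        have hd8 := hdist c hc c' hc' hcc
        have h8 := hweight c hc
        have h8' := hweight c' hc'
        omega
      calc ∑ i ∈ B, v i * w i ≤ ∑ i ∈ B, (1 : ℝ) := Finset.sum_le_sum hbound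
        _ = B.card := by rw [Finset.sum_const, nsmul_eq_mul, mul_one]
        _ ≤ 4 := by exact_mod_cast hB4
  ------------------------------------------------------------------
  -- type 2 with a sign vector
  ------------------------------------------------------------------
  have h2W : ∀ (v : EuclideanSpace ℝ (Fin n)) (c d : Fin n → ZMod 2),
      c ∈ C → d ∈ D →
      (∀ i, c i ≠ 0 → (v i = 1 ∨ v i = -1)) → (∀ i, c i = 0 → v i = 0) →
      Odd {i : Fin n | v i = -1}.ncard → ⟪v, signVector n d⟫ ≤ 4 := by
    intro v c d hc hd hv1 hv0 hvodd
    rw [hip]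
    have hsv0 : ∀ i : Fin n, d i = 0 → signVector n d i = s := by
      intro i h
      simp only [signVector, ← hs_def]
      rw [if_pos h]
      ring
    have hsv1 : ∀ i : Fin n, d i = 1 → signVector n d i = -s := by
      intro i h
      simp only [signVector, ← hs_def]
      rw [if_neg (show ¬ d i = 0 by rw [h]; decide)]
      ring
    set A : Finset (Fin n) := Finset.univ.filter (fun i => c i ≠ 0) with hA
    have hA8 : A.card = 8 := hweight c hc
    have hsum : ∑ i, v i * signVector n d i = ∑ i ∈ A, v i * signVector n d i := by
      symm
      apply Finset.sum_subset (Finset.subset_univ A)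
      intro k _ hk
      simp only [hA, Finset.mem_filter, Finset.mem_univ, true_and, not_not] at hk
      rw [hv0 k hk, zero_mul]
    rw [hsum]
    set p : Fin n → Prop := fun i => (v i = -1 ↔ d i = 0) with hp
    set E : Finset (Fin n) := A.filter p with hE
    have hvalE : ∀ i ∈ E, v i * signVector n d i = -s := by
      intro i hi
      rw [hE] at hi
      obtain ⟨hiA, hpi⟩ := Finset.mem_filter.mp hi
      have hci : c i ≠ 0 := by
        rw [hA] at hiA
        exact (Finset.mem_filter.mp hiA).2
      have hpi' : v i = -1 ↔ d i = 0 := by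
        simpa only [hp] using hpi
      rcases hv1 i hci with h | h <;> rcases zmod2_em (d i) with h' | h'
      · exfalso
        rw [h, h'] at hpi'
        have := hpi'.mpr rfl
        norm_num at this
      · rw [h, hsv1 i h']
        ring
      · rw [h, hsv0 i h']
        ring
      · exfalso
        rw [h, h'] at hpi'
        exact absurd (hpi'.mp rfl) (by decide)
    have hvalF : ∀ i ∈ A.filter (fun i => ¬ p i), v i * signVector n d i = s := by
      intro i hi
      obtain ⟨hiA, hnpi⟩ := Finset.mem_filter.mp hi
      have hci : c i ≠ 0 := by
        rw [hA] at hiA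
        exact (Finset.mem_filter.mp hiA).2
      have hnpi' : ¬ (v i = -1 ↔ d i = 0) := by
        simpa only [hp] using hnpi
      rcases hv1 i hci with h | h <;> rcases zmod2_em (d i) with h' | h'
      · rw [h, hsv0 i h']
        ring
      · exfalso
        apply hnpi'
        rw [h, h']
        constructor
        · intro hh
          norm_num at hh
        · intro hh
          exact absurd hh (by decide)
      · exfalso
        apply hnpi'
        rw [h, h']
        exact ⟨fun _ => rfl, fun _ => rfl⟩
      · rw [h, hsv1 i h']
        ring
    -- parity of E.card : odd
    have hNv : ((Finset.univ.filter fun i => v i = -1).card : ZMod 2) = 1 :=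
      odd_cast_zmod2 (by rw [← hsetcard v]; exact hvodd)
    have hNvA : ((Finset.univ.filter fun i => v i = -1).card : ZMod 2)
        = ∑ i ∈ A, if v i = -1 then (1 : ZMod 2) else 0 := by
      rw [Finset.natCast_card_filter]
      symm
      apply Finset.sum_subset (Finset.subset_univ A)
      intro k _ hk
      simp only [hA, Finset.mem_filter, Finset.mem_univ, true_and, not_not] at hk
      rw [if_neg]
      rw [hv0 k hk]
      norm_num
    have hdA : ((A.filter fun i => d i = 1).card : ZMod 2) = 0 := by
      have e1 : ((A.filter fun i => d i = 1).card : ZMod 2)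
          = ∑ i ∈ A, if d i = 1 then (1 : ZMod 2) else 0 := Finset.natCast_card_filter _ _
      have e2 : (∑ i ∈ A, if d i = 1 then (1 : ZMod 2) else 0) = ∑ i, d i * c i := by
        rw [hA, Finset.sum_filter]
        apply Finset.sum_congr rfl
        intro i _
        rcases zmod2_em (c i) with h | h <;> rcases zmod2_em (d i) with h' | h' <;>
          rw [h, h'] <;> decide
      rw [e1, e2, horth d hd c hc]
    have hdcast : ((A.filter fun i => d i = 1).card : ZMod 2)
        = ∑ i ∈ A, if d i = 1 then (1 : ZMod 2) else 0 := Finset.natCast_card_filter _ _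
    have hparity : (E.card : ZMod 2) = 1 := by
      have hcast : (E.card : ZMod 2) = ∑ i ∈ A, if p i then (1 : ZMod 2) else 0 := by
        rw [hE]
        exact Finset.natCast_card_filter _ _
      have hpoint : ∀ i ∈ A, (if p i then (1 : ZMod 2) else 0)
          = (if v i = -1 then (1 : ZMod 2) else 0)
            + (if d i = 1 then (1 : ZMod 2) else 0) := by
        intro i hi
        have hci : c i ≠ 0 := by
          rw [hA] at hi
          exact (Finset.mem_filter.mp hi).2
        rcases hv1 i hci with h | h <;> rcases zmod2_em (d i) with h' | h'
        · have h1 : ¬ p i := by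
            simp only [hp]
            rw [h, h']
            intro hiff
            have := hiff.mpr rfl
            norm_num at this
          have h2 : ¬ (v i = -1) := by rw [h]; norm_num
          have h3 : ¬ (d i = 1) := by rw [h']; decide
          rw [if_neg h1, if_neg h2, if_neg h3]
          decide
        · have h1 : p i := by
            simp only [hp]
            rw [h, h']
            constructor
            · intro hh
              norm_num at hh
            · intro hh
              exact absurd hh (by decide)
          have h2 : ¬ (v i = -1) := by rw [h]; norm_num
          rw [if_pos h1, if_neg h2, if_pos h']
          decide
        · have h1 : p i := by
            simp only [hp]
            rw [h, h']
            exact ⟨fun _ => rfl, fun _ => rfl⟩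
          have h3 : ¬ (d i = 1) := by rw [h']; decide
          rw [if_pos h1, if_pos h, if_neg h3]
          decide
        · have h1 : ¬ p i := by
            simp only [hp]
            rw [h, h']
            intro hiff
            exact absurd (hiff.mp rfl) (by decide)
          rw [if_neg h1, if_pos h, if_pos h']
          decide
      rw [hcast, Finset.sum_congr rfl hpoint, Finset.sum_add_distrib, ← hNvA, ← hdcast,
        hNv, hdA]
      decide
    have hk1 : 1 ≤ E.card := by
      have := odd_of_cast_zmod2 hparity
      omega
    have hkle : E.card ≤ 8 := by
      rw [hE]
      exact (Finset.card_filter_le _ _).trans hA8.le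
    rw [← Finset.sum_filter_add_sum_filter_not A p (fun i => v i * signVector n d i)]
    rw [Finset.sum_congr rfl hvalE, Finset.sum_congr rfl hvalF, Finset.sum_const,
      Finset.sum_const, nsmul_eq_mul, nsmul_eq_mul]
    have hcards := Finset.card_filter_add_card_filter_not (s := A) (p := p)
    have hc2 : (A.filter fun i => ¬ p i).card = 8 - E.card := by
      rw [hE]
      omega
    rw [hc2, Nat.cast_sub hkle]
    have hkR : (1 : ℝ) ≤ (E.card : ℝ) := by exact_mod_cast hk1
    push_cast
    nlinarith [mul_nonneg (by linarith : (0 : ℝ) ≤ 2 * (E.card : ℝ) - 2) hs_nonneg, hs23,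
      hs_nonneg]
  ------------------------------------------------------------------
  -- two sign vectors
  ------------------------------------------------------------------
  have hWW : ∀ d d' : Fin n → ZMod 2, d ∈ D → d' ∈ D → d ≠ d' →
      ⟪signVector n d, signVector n d'⟫ ≤ 4 := by
    intro d d' hd hd' hne
    rw [hip]
    set E : Finset (Fin n) := Finset.univ.filter (fun i => d i ≠ d' i) with hE
    have hEd : hammingDist d d' = E.card := rfl
    have hEcard : (n : ℝ) / 4 ≤ (E.card : ℝ) := by
      have := hDdist d hd d' hd' hne
      rwa [hEd] at this
    have hvalE : ∀ i ∈ E, signVector n d i * signVector n d' i = -(s * s) := by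
      intro i hi
      simp only [hE, Finset.mem_filter, Finset.mem_univ, true_and] at hi
      rcases zmod2_em (d i) with h | h <;> rcases zmod2_em (d' i) with h' | h'
      · exact absurd (h.trans h'.symm) hi
      · simp only [signVector, ← hs_def]
        rw [if_pos h, if_neg (by rw [h']; decide)]
        ring
      · simp only [signVector, ← hs_def]
        rw [if_neg (show ¬ d i = 0 by rw [h]; decide), if_pos h']
        ring
      · exact absurd (h.trans h'.symm) hi
    have hvalF : ∀ i ∈ Finset.univ.filter (fun i => ¬ d i ≠ d' i),
        signVector n d i * signVector n d' i = s * s := by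
      intro i hi
      simp only [Finset.mem_filter, Finset.mem_univ, true_and, not_not] at hi
      rcases zmod2_em (d i) with h | h
      · simp only [signVector, ← hs_def]
        rw [if_pos h, if_pos (by rw [← hi]; exact h)]
        ring
      · simp only [signVector, ← hs_def]
        rw [if_neg (show ¬ d i = 0 by rw [h]; decide), if_neg (by rw [← hi, h]; decide)]
        ring
    have hcards := Finset.card_filter_add_card_filter_not
      (s := (Finset.univ : Finset (Fin n))) (p := fun i => d i ≠ d' i)
    rw [Finset.card_univ, Fintype.card_fin] at hcards
    rw [← Finset.sum_filter_add_sum_filter_not Finset.univ (fun i => d i ≠ d' i)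
      (fun i => signVector n d i * signVector n d' i)]
    rw [Finset.sum_congr rfl hvalE, Finset.sum_congr rfl hvalF, Finset.sum_const,
      Finset.sum_const, nsmul_eq_mul, nsmul_eq_mul]
    have hle : E.card ≤ n := by rw [hE] at *; omega
    have hFcard : ((Finset.univ.filter fun i => ¬ d i ≠ d' i).card : ℝ)
        = (n : ℝ) - E.card := by
      have h1 : (Finset.univ.filter fun i => ¬ d i ≠ d' i).card = n - E.card := by
        rw [hE] at *; omega
      rw [h1, Nat.cast_sub hle]
    rw [hFcard, hss]
    have h1 : (E.card : ℝ) * (-(8 / n)) + ((n : ℝ) - E.card) * (8 / n)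
        = (((n : ℝ) - 2 * E.card) * 8) / n := by
      field_simp
      ring
    rw [h1, div_le_iff₀ hn0]
    linarith [hEcard]
  ------------------------------------------------------------------
  -- assembling the three claims
  ------------------------------------------------------------------
  refine ⟨?_, ?_, ?_⟩
  · -- norms
    intro v hv
    simp only [oddKissingConfig, Set.mem_union, Set.mem_setOf_eq, Set.mem_image,
      Finset.mem_coe] at hv
    rcases hv with (hv1 | ⟨c, hc, h1, h0, -⟩) | ⟨d, hd, rfl⟩
    · exact hnorm1 v hv1
    · exact hnorm2 v c hc h1 h0
    · exact hnormW d
  · -- inner products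
    intro v hv w hw hvw
    simp only [oddKissingConfig, Set.mem_union, Set.mem_setOf_eq, Set.mem_image,
      Finset.mem_coe] at hv hw
    rcases hv with (hv1 | ⟨c, hc, hcv1, hcv0, hcvodd⟩) | ⟨d, hdD, rfl⟩
    · rcases hw with (hw1 | ⟨c', hc', hcw1, hcw0, hcwodd⟩) | ⟨e, heD, rfl⟩
      · exact h11 v w hv1 hw1 hvw
      · exact h12 v w hv1 (hvals w c' hcw1 hcw0)
      · exact h1W v e hv1
    · rcases hw with (hw1 | ⟨c', hc', hcw1, hcw0, hcwodd⟩) | ⟨e, heD, rfl⟩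
      · rw [real_inner_comm]
        exact h12 w v hw1 (hvals v c hcv1 hcv0)
      · exact h22 v w c c' hc hc' hcv1 hcv0 hcvodd hcw1 hcw0 hcwodd hvw
      · exact h2W v c e hc heD hcv1 hcv0 hcvodd
    · rcases hw with (hw1 | ⟨c', hc', hcw1, hcw0, hcwodd⟩) | ⟨e, heD, rfl⟩
      · rw [real_inner_comm]
        exact h1W w d hw1
      · rw [real_inner_comm]
        exact h2W w c' d hc' hdD hcw1 hcw0 hcwodd
      · refine hWW d e hdD heD ?_
        intro hde
        exact hvw (by rw [hde])
  · -- cardinality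
    set F1 : Finset ((Fin n × Fin n) × Bool × Bool) :=
      (Finset.univ.filter fun p : Fin n × Fin n => p.1 < p.2) ×ˢ Finset.univ with hF1
    set F2 : Finset (Σ _ : Fin n → ZMod 2, Finset (Fin n)) :=
      C.sigma (fun c => (Finset.univ.filter fun i => c i ≠ 0).powerset.filter
        fun S => Odd S.card) with hF2
    have hmem1 : ∀ (i j : Fin n) (a b : Bool), i < j → ((i, j), (a, b)) ∈ F1 := by
      intro i j a b hlt
      simp [hF1, Finset.mem_product, Finset.mem_filter, hlt]
    have hpair_eq : ∀ (w : EuclideanSpace ℝ (Fin n)) (i j : Fin n) (a b : Bool),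
        i ≠ j → w i = (if a then (2 : ℝ) else -2) → w j = (if b then (2 : ℝ) else -2) →
        (∀ k : Fin n, k ≠ i → k ≠ j → w k = 0) → pairVec n ((i, j), (a, b)) = w := by
      intro w i j a b hij h1 h2 h0
      ext k
      simp only [pairVec]
      by_cases hk1 : k = i
      · subst hk1
        rw [if_pos rfl, h1]
      · rw [if_neg hk1]
        by_cases hk2 : k = j
        · subst hk2
          rw [if_pos rfl, h2]
        · rw [if_neg hk2, h0 k hk1 hk2]
    have hV1 : {w : EuclideanSpace ℝ (Fin n) | ∃ i j : Fin n, i ≠ j ∧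
        (w i = 2 ∨ w i = -2) ∧ (w j = 2 ∨ w j = -2) ∧
        ∀ k : Fin n, k ≠ i → k ≠ j → w k = 0}
        = ↑(F1.image (pairVec n)) := by
      ext w
      simp only [Set.mem_setOf_eq, Finset.coe_image, Set.mem_image, Finset.mem_coe]
      constructor
      · rintro ⟨i, j, hij, hvi, hvj, h0⟩
        rcases lt_or_gt_of_ne hij with hlt | hlt
        · rcases hvi with h1 | h1 <;> rcases hvj with h2 | h2
          · exact ⟨((i, j), (true, true)), hmem1 i j true true hlt,
              hpair_eq w i j true true hij (by simpa using h1) (by simpa using h2) h0⟩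
          · exact ⟨((i, j), (true, false)), hmem1 i j true false hlt,
              hpair_eq w i j true false hij (by simpa using h1) (by simpa using h2) h0⟩
          · exact ⟨((i, j), (false, true)), hmem1 i j false true hlt,
              hpair_eq w i j false true hij (by simpa using h1) (by simpa using h2) h0⟩
          · exact ⟨((i, j), (false, false)), hmem1 i j false false hlt,
              hpair_eq w i j false false hij (by simpa using h1) (by simpa using h2) h0⟩
        · have h0' : ∀ k : Fin n, k ≠ j → k ≠ i → w k = 0 := fun k hka hkb => h0 k hkb hka
          rcases hvj with h2 | h2 <;> rcases hvi with h1 | h1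
          · exact ⟨((j, i), (true, true)), hmem1 j i true true hlt,
              hpair_eq w j i true true hij.symm (by simpa using h2) (by simpa using h1) h0'⟩
          · exact ⟨((j, i), (true, false)), hmem1 j i true false hlt,
              hpair_eq w j i true false hij.symm (by simpa using h2) (by simpa using h1) h0'⟩
          · exact ⟨((j, i), (false, true)), hmem1 j i false true hlt,
              hpair_eq w j i false true hij.symm (by simpa using h2) (by simpa using h1) h0'⟩
          · exact ⟨((j, i), (false, false)), hmem1 j i false false hlt,
              hpair_eq w j i false false hij.symm (by simpa using h2) (by simpa using h1) h0'⟩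
      · rintro ⟨⟨⟨i, j⟩, a, b⟩, hq, rfl⟩
        have hij : i < j := by
          simp only [hF1, Finset.mem_product, Finset.mem_filter, Finset.mem_univ,
            true_and, and_true] at hq
          exact hq
        refine ⟨i, j, ne_of_lt hij, ?_, ?_, ?_⟩
        · cases a <;> simp [pairVec]
        · cases b <;> simp [pairVec, (ne_of_lt hij).symm]
        · intro k hk1 hk2
          simp [pairVec, hk1, hk2]
    have hinj1 : Set.InjOn (pairVec n) ↑F1 := by
      rintro ⟨⟨i, j⟩, a, b⟩ hq ⟨⟨i', j'⟩, a', b'⟩ hq' heq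
      simp only [hF1, Finset.coe_product, Finset.coe_filter, Set.mem_prod,
        Set.mem_setOf_eq, Finset.mem_univ, true_and, Set.mem_univ, and_true,
        Finset.mem_coe, Finset.mem_product, Finset.mem_filter] at hq hq'
      have hij : i < j := hq
      have hij' : i' < j' := hq'
      have hne : i ≠ j := ne_of_lt hij
      have hne' : i' ≠ j' := ne_of_lt hij'
      have e1 : (if a then (2 : ℝ) else -2) = pairVec n ((i', j'), (a', b')) i := by
        rw [← congrFun (congrArg WithLp.ofLp heq) i]
        simp [pairVec]
      have e2 : (if b then (2 : ℝ) else -2) = pairVec n ((i', j'), (a', b')) j := by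
        rw [← congrFun (congrArg WithLp.ofLp heq) j]
        simp [pairVec, Ne.symm hne]
      have hi_mem : i = i' ∨ i = j' := by
        by_contra hcon
        push_neg at hcon
        rw [show pairVec n ((i', j'), (a', b')) i = 0 from by
          simp [pairVec, hcon.1, hcon.2]] at e1
        cases a <;> norm_num at e1
      have hj_mem : j = i' ∨ j = j' := by
        by_contra hcon
        push_neg at hcon
        rw [show pairVec n ((i', j'), (a', b')) j = 0 from by
          simp [pairVec, hcon.1, hcon.2]] at e2
        cases b <;> norm_num at e2
      have hii : i = i' ∧ j = j' := by
        rcases hi_mem with h | h <;> rcases hj_mem with h' | h'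
        · exact absurd (h.trans h'.symm) hne
        · exact ⟨h, h'⟩
        · subst h; subst h'
          exact absurd (hij.trans hij') (lt_irrefl _)
        · exact absurd (h.trans h'.symm) hne
      obtain ⟨hii', hjj'⟩ := hii
      subst hii'
      subst hjj'
      rw [show pairVec n ((i, j), (a', b')) i = (if a' then (2 : ℝ) else -2) from by
        simp [pairVec]] at e1
      rw [show pairVec n ((i, j), (a', b')) j = (if b' then (2 : ℝ) else -2) from by
        simp [pairVec, Ne.symm hne]] at e2
      have haa : a = a' := by
        cases a <;> cases a' <;> first
          | rfl
          | (exfalso; norm_num at e1)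
      have hbb : b = b' := by
        cases b <;> cases b' <;> first
          | rfl
          | (exfalso; norm_num at e2)
      rw [haa, hbb]
    have hcard1 : (F1.image (pairVec n)).card = n.choose 2 * 4 := by
      rw [Finset.card_image_of_injOn hinj1, hF1, Finset.card_product, card_lt_pairs]
      have h4 : (Finset.univ : Finset (Bool × Bool)).card = 4 := by decide
      rw [h4]
    -- type 2 set
    have hV2 : {w : EuclideanSpace ℝ (Fin n) | ∃ c ∈ C,
        (∀ i : Fin n, c i ≠ 0 → (w i = 1 ∨ w i = -1)) ∧
        (∀ i : Fin n, c i = 0 → w i = 0) ∧ Odd {i : Fin n | w i = -1}.ncard}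
        = ↑(F2.image (codeVec n)) := by
      ext w
      simp only [Set.mem_setOf_eq, Finset.coe_image, Set.mem_image, Finset.mem_coe]
      constructor
      · rintro ⟨c, hc, h1, h0, hodd⟩
        refine ⟨⟨c, Finset.univ.filter fun i => w i = -1⟩, ?_, ?_⟩
        · simp only [hF2, Finset.mem_sigma, Finset.mem_filter, Finset.mem_powerset]
          refine ⟨hc, ?_, ?_⟩
          · intro i hi
            simp only [Finset.mem_filter, Finset.mem_univ, true_and] at hi ⊢
            intro hci
            rw [h0 i hci] at hi
            norm_num at hi
          · rw [← hsetcard w]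
            exact hodd
        · ext i
          by_cases hiw : w i = -1
          · have hiS : i ∈ Finset.univ.filter fun i => w i = -1 := by
              simp [hiw]
            have hval : codeVec n ⟨c, Finset.univ.filter fun i => w i = -1⟩ i = -1 := by
              simp [codeVec, hiS, hiw]
            rw [hval, hiw]
          · have hiS : i ∉ Finset.univ.filter fun i => w i = -1 := by
              simp [hiw]
            have hval : codeVec n ⟨c, Finset.univ.filter fun i => w i = -1⟩ i
                = if c i ≠ 0 then 1 else 0 := by
              simp only [codeVec]
              rw [if_neg hiS]
            by_cases hci : c i = 0
            · rw [hval, if_neg (by simp [hci]), h0 i hci]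
            · rcases h1 i hci with h | h
              · rw [hval, if_pos hci, h]
              · exact absurd h hiw
      · rintro ⟨⟨c, S⟩, hq, rfl⟩
        simp only [hF2, Finset.mem_sigma, Finset.mem_filter, Finset.mem_powerset] at hq
        obtain ⟨hcC, hSsub, hSodd⟩ := hq
        have hSc : ∀ i ∈ S, c i ≠ 0 := by
          intro i hi
          have := hSsub hi
          simp only [Finset.mem_filter, Finset.mem_univ, true_and] at this
          exact this
        refine ⟨c, hcC, ?_, ?_, ?_⟩
        · intro i hci
          by_cases hiS : i ∈ S
          · right
            simp [codeVec, hiS]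
          · left
            simp [codeVec, hiS, hci]
        · intro i hci
          have hiS : i ∉ S := fun h => (hSc i h) hci
          simp [codeVec, hiS, hci]
        · have hset : (Finset.univ.filter fun i => codeVec n ⟨c, S⟩ i = -1) = S := by
            ext i
            simp only [Finset.mem_filter, Finset.mem_univ, true_and]
            constructor
            · intro h
              by_contra hiS
              by_cases hci : c i = 0
              · simp only [codeVec, if_neg hiS] at h
                rw [if_neg (by simp [hci])] at h
                norm_num at h
              · simp only [codeVec, if_neg hiS] at h
                rw [if_pos (by simpa using hci)] at h
                norm_num at h
            · intro h
              simp [codeVec, h]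
          rw [hsetcard, hset]
          exact hSodd
    have hinj2 : Set.InjOn (codeVec n) ↑F2 := by
      rintro ⟨c, S⟩ hq ⟨c', S'⟩ hq' heq
      simp only [hF2, Finset.mem_coe, Finset.mem_sigma, Finset.mem_filter,
        Finset.mem_powerset] at hq hq'
      obtain ⟨hcC, hSsub, -⟩ := hq
      obtain ⟨hcC', hSsub', -⟩ := hq'
      have hSc : ∀ i ∈ S, c i ≠ 0 := by
        intro i hi
        have := hSsub hi
        simp only [Finset.mem_filter, Finset.mem_univ, true_and] at this
        exact this
      have hSc' : ∀ i ∈ S', c' i ≠ 0 := by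
        intro i hi
        have := hSsub' hi
        simp only [Finset.mem_filter, Finset.mem_univ, true_and] at this
        exact this
      have hSS : S = S' := by
        ext i
        have hi := congrFun (congrArg WithLp.ofLp heq) i
        simp only [codeVec] at hi
        constructor
        · intro h
          by_contra h'
          rw [if_pos h, if_neg h'] at hi
          by_cases hci : c' i = 0
          · rw [if_neg (by simpa using hci)] at hi
            norm_num at hi
          · rw [if_pos (by simpa using hci)] at hi
            norm_num at hi
        · intro h
          by_contra h'
          rw [if_neg h', if_pos h] at hi
          by_cases hci : c i = 0
          · rw [if_neg (by simpa using hci)] at hi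
            norm_num at hi
          · rw [if_pos (by simpa using hci)] at hi
            norm_num at hi
      subst hSS
      have hcc : c = c' := by
        funext i
        have hi := congrFun (congrArg WithLp.ofLp heq) i
        simp only [codeVec] at hi
        rcases zmod2_em (c i) with h | h <;> rcases zmod2_em (c' i) with h' | h'
        · rw [h, h']
        · exfalso
          by_cases hiS : i ∈ S
          · exact (hSc i hiS) h
          · rw [if_neg hiS, if_neg hiS, if_neg (by simp [h]),
              if_pos (by simp [h'])] at hi
            norm_num at hi
        · exfalso
          by_cases hiS : i ∈ S
          · exact (hSc' i hiS) h'
          · rw [if_neg hiS, if_neg hiS, if_pos (by simp [h]),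
              if_neg (by simp [h'])] at hi
            norm_num at hi
        · rw [h, h']
      subst hcc
      rfl
    have hcard2 : (F2.image (codeVec n)).card = 128 * C.card := by
      rw [Finset.card_image_of_injOn hinj2, hF2, Finset.card_sigma]
      have hconst : ∀ c ∈ C, ((Finset.univ.filter fun i => c i ≠ 0).powerset.filter
          fun S => Odd S.card).card = 128 := by
        intro c hc
        have h8 : (Finset.univ.filter fun i => c i ≠ 0).card = 8 := hweight c hc
        rw [card_odd_powerset _ (Finset.card_pos.mp (by rw [h8]; norm_num)), h8]
        norm_num
      rw [Finset.sum_const_nat hconst]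
      ring
    -- disjointness
    have hdisj12 : Disjoint
        {w : EuclideanSpace ℝ (Fin n) | ∃ i j : Fin n, i ≠ j ∧
          (w i = 2 ∨ w i = -2) ∧ (w j = 2 ∨ w j = -2) ∧
          ∀ k : Fin n, k ≠ i → k ≠ j → w k = 0}
        {w : EuclideanSpace ℝ (Fin n) | ∃ c ∈ C,
          (∀ i : Fin n, c i ≠ 0 → (w i = 1 ∨ w i = -1)) ∧
          (∀ i : Fin n, c i = 0 → w i = 0) ∧ Odd {i : Fin n | w i = -1}.ncard} := by
      rw [Set.disjoint_left]
      rintro v ⟨i, j, hij, hvi, hvj, hv0⟩ ⟨c, hc, h1, h0, -⟩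
      rcases hvals v c h1 h0 i with h | h | h <;> rw [h] at hvi <;> norm_num at hvi
    have hnzW : ∀ (d : Fin n → ZMod 2) (k : Fin n), signVector n d k ≠ 0 := by
      intro d k
      rcases hsv d k with h | h <;> rw [h]
      · exact hs_pos.ne'
      · intro hc0
        rw [neg_eq_zero] at hc0
        exact hs_pos.ne' hc0
    have hdisjW : Disjoint (oddKissingConfig n C) (signVector n '' ↑D) := by
      rw [Set.disjoint_left]
      rintro v hv ⟨d, -, rfl⟩
      simp only [oddKissingConfig, Set.mem_setOf_eq] at hv
      rcases hv with ⟨i, j, hij, hvi, hvj, hv0⟩ | ⟨c, hc, h1, h0, -⟩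
      · obtain ⟨k, hk1, hk2⟩ : ∃ k : Fin n, k ≠ i ∧ k ≠ j := by
          by_contra hcon
          push_neg at hcon
          have hsub : (Finset.univ : Finset (Fin n)) ⊆ {i, j} := by
            intro k _
            simp only [Finset.mem_insert, Finset.mem_singleton]
            by_cases h : k = i
            · exact Or.inl h
            · exact Or.inr (hcon k h)
          have hle := Finset.card_le_card hsub
          have h2 : ({i, j} : Finset (Fin n)).card ≤ 2 := by
            refine le_trans (Finset.card_insert_le i {j}) ?_
            simp
          rw [Finset.card_univ, Fintype.card_fin] at hle
          omega
        exact hnzW d k (hv0 k hk1 hk2)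
      · obtain ⟨k, hk⟩ : ∃ k : Fin n, c k = 0 := by
          by_contra hcon
          push_neg at hcon
          have h8 : (Finset.univ.filter fun i => c i ≠ 0).card = 8 := hweight c hc
          rw [Finset.filter_true_of_mem (fun i _ => hcon i), Finset.card_univ,
            Fintype.card_fin] at h8
          omega
        exact hnzW d k (h0 k hk)
    have hinjW : Set.InjOn (signVector n) ↑D := by
      intro d _ d' _ h
      funext i
      have hi := congrFun (congrArg WithLp.ofLp h) i
      simp only [signVector, ← hs_def] at hi
      rcases zmod2_em (d i) with h1 | h1 <;> rcases zmod2_em (d' i) with h2 | h2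
      · rw [h1, h2]
      · exfalso
        rw [h1, h2, if_pos rfl, if_neg (by decide : ¬(1 : ZMod 2) = 0)] at hi
        linarith [hs_pos]
      · exfalso
        rw [h1, h2, if_neg (by decide : ¬(1 : ZMod 2) = 0), if_pos rfl] at hi
        linarith [hs_pos]
      · rw [h1, h2]
    have hconfig : oddKissingConfig n C
        = (↑(F1.image (pairVec n)) ∪ ↑(F2.image (codeVec n)) :
            Set (EuclideanSpace ℝ (Fin n))) := by
      rw [← hV1, ← hV2]
      rfl
    have hfin1 : (↑(F1.image (pairVec n)) : Set (EuclideanSpace ℝ (Fin n))).Finite :=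
      Finset.finite_toSet _
    have hfin2 : (↑(F2.image (codeVec n)) : Set (EuclideanSpace ℝ (Fin n))).Finite :=
      Finset.finite_toSet _
    have hfinW : (signVector n '' ↑D).Finite := (D.finite_toSet).image _
    have hdisj12' : Disjoint (↑(F1.image (pairVec n)) : Set (EuclideanSpace ℝ (Fin n)))
        ↑(F2.image (codeVec n)) := by
      rw [← hV1, ← hV2]
      exact hdisj12
    rw [hconfig, Set.ncard_union_eq (by rw [← hconfig]; exact hdisjW)
        (hfin1.union hfin2) hfinW,
      Set.ncard_union_eq hdisj12' hfin1 hfin2, Set.ncard_coe_finset, Set.ncard_coe_finset,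
      hcard1, hcard2, Set.ncard_image_of_injOn hinjW, Set.ncard_coe_finset]
    ring
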